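/- Let Γ be a graph on vertex set X with adjacency matrix A, let {v_0, ..., v_{n−1}} be an orthonormal eigenbasis of A with v_0 the all-ones vector normalised, let P(k) be the eigenvalue of v_k with P(0) > 0, and let P_min = min_{k≠0} P(k) < 0. If Y ⊆ X is an independent set of Γ, then |Y|/|X| ≤ |P_min| / (P(0) + |P_min|). -/

import Mathlib

/-- The Hoffman ratio bound: if `A` is the adjacency matrix of a graph `Γ` with
orthonormal eigenbasis `v` whose first vector is the (normalised) all-ones
vector, with eigenvalues `P k`, `P 0 > 0` and minimal nontrivial eigenvalue
`Pmin < 0`, then any independent set `Y` satisfies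
`|Y|/|X| ≤ |Pmin|/(P 0 + |Pmin|)`. -/
theorem hoffman_bound (X : Type) [Fintype X] (Γ : SimpleGraph X) [DecidableRel Γ.Adj]
    (m : ℕ) (hm : Fintype.card X = m) (hpos : 0 < m)
    (v : Fin m → (X → ℝ)) (P : Fin m → ℝ)
    (horth : ∀ k l : Fin m, ∑ x : X, v k x * v l x = if k = l then (1 : ℝ) else 0)
    (hv0 : ∀ x : X, v ⟨0, hpos⟩ x = 1 / Real.sqrt m)
    (heig : ∀ k : Fin m, (Γ.adjMatrix ℝ).mulVec (v k) = P k • v k)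
    (hP0 : 0 < P ⟨0, hpos⟩)
    (Pmin : ℝ)
    (hmin1 : ∀ k : Fin m, k ≠ ⟨0, hpos⟩ → Pmin ≤ P k)
    (hmin2 : ∃ k : Fin m, k ≠ ⟨0, hpos⟩ ∧ P k = Pmin)
    (hminneg : Pmin < 0)
    (Y : Finset X) (hY : ∀ x ∈ Y, ∀ y ∈ Y, ¬Γ.Adj x y) :
    (Y.card : ℝ) / m ≤ |Pmin| / (P ⟨0, hpos⟩ + |Pmin|) := by
  classical
  set i0 : Fin m := ⟨0, hpos⟩ with hi0
  have hm0 : (0:ℝ) < m := by exact_mod_cast hpos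
  -- completeness : the v k form a complete orthonormal system
  let e : X ≃ Fin m := Fintype.equivFinOfCardEq hm
  have hcomp : ∀ x y : X, ∑ k : Fin m, v k x * v k y = if x = y then 1 else 0 := by
    set W : Matrix (Fin m) (Fin m) ℝ := fun k j => v k (e.symm j) with hW
    have h1 : W * W.transpose = 1 := by
      ext k l
      simp only [Matrix.mul_apply, Matrix.transpose_apply, Matrix.one_apply, hW]
      rw [← horth k l]
      exact (Equiv.sum_comp e.symm fun x => v k x * v l x)
    have h2 : W.transpose * W = 1 := mul_eq_one_comm.mp h1
    intro x y
    have h3 := congrFun (congrFun h2 (e x)) (e y)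
    rw [Matrix.mul_apply] at h3
    simp only [Matrix.transpose_apply] at h3
    simp only [Matrix.mul_apply, Matrix.transpose_apply, Matrix.one_apply,
      Equiv.symm_apply_apply, EmbeddingLike.apply_eq_iff_eq, hW] at h3
    exact h3
  -- spectral decomposition of the adjacency matrix
  have hA : ∀ x y : X, (Γ.adjMatrix ℝ) x y = ∑ k : Fin m, P k * (v k x * v k y) := by
    intro x y
    have key : ∑ z : X, (Γ.adjMatrix ℝ) x z * (∑ k : Fin m, v k z * v k y)
        = ∑ k : Fin m, P k * (v k x * v k y) := by
      simp_rw [Finset.mul_sum]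
      rw [Finset.sum_comm]
      refine Finset.sum_congr rfl fun k _ => ?_
      have h1 : ∑ z, (Γ.adjMatrix ℝ) x z * (v k z * v k y)
          = (∑ z, (Γ.adjMatrix ℝ) x z * v k z) * v k y := by
        rw [Finset.sum_mul]
        exact Finset.sum_congr rfl fun z _ => by ring
      rw [h1]
      have h2 : (∑ z, (Γ.adjMatrix ℝ) x z * v k z) = P k * v k x := by
        have h3 := congrFun (heig k) x
        simpa [Matrix.mulVec, dotProduct] using h3
      rw [h2]; ring
    calc (Γ.adjMatrix ℝ) x y
        = ∑ z : X, (Γ.adjMatrix ℝ) x z * (if z = y then 1 else 0) := by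
          simp
      _ = ∑ z : X, (Γ.adjMatrix ℝ) x z * (∑ k : Fin m, v k z * v k y) := by
          refine Finset.sum_congr rfl fun z _ => ?_
          rw [hcomp z y]
      _ = ∑ k : Fin m, P k * (v k x * v k y) := key
  -- Fourier coefficients of the indicator of Y
  set c : Fin m → ℝ := fun k => ∑ x ∈ Y, v k x with hc
  have hAY : ∀ x ∈ Y, ∀ y ∈ Y, (Γ.adjMatrix ℝ) x y = 0 := by
    intro x hx y hy
    simp [SimpleGraph.adjMatrix_apply, hY x hx y hy]
  have expand : ∀ f : Fin m → ℝ, ∀ k : Fin m,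
      f k * (c k)^2 = ∑ x ∈ Y, ∑ y ∈ Y, f k * (v k x * v k y) := by
    intro f k
    have h1 : (c k)^2 = ∑ x ∈ Y, ∑ y ∈ Y, v k x * v k y := by
      rw [hc, pow_two, Finset.sum_mul_sum]
    rw [h1, Finset.mul_sum]
    exact Finset.sum_congr rfl fun x _ => by rw [Finset.mul_sum]
  have hzero : ∑ k : Fin m, P k * (c k)^2 = 0 := by
    rw [Finset.sum_congr rfl fun k _ => expand P k]
    rw [Finset.sum_comm]
    refine Finset.sum_eq_zero fun x hx => ?_
    rw [Finset.sum_comm]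
    refine Finset.sum_eq_zero fun y hy => ?_
    rw [← hA x y, hAY x hx y hy]
  have hpar : ∑ k : Fin m, (c k)^2 = (Y.card : ℝ) := by
    have h1 : ∑ k : Fin m, (c k)^2 = ∑ k : Fin m, (1:ℝ) * (c k)^2 := by
      simp
    rw [h1, Finset.sum_congr rfl fun k _ => expand (fun _ => (1:ℝ)) k]
    rw [Finset.sum_comm]
    have h2 : ∀ x ∈ Y, ∑ k : Fin m, ∑ y ∈ Y, (1:ℝ) * (v k x * v k y) = 1 := by
      intro x hx
      rw [Finset.sum_comm]
      have h3 : ∀ y ∈ Y, ∑ k : Fin m, (1:ℝ) * (v k x * v k y)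
          = if x = y then 1 else 0 := by
        intro y hy
        simp only [one_mul]
        exact hcomp x y
      rw [Finset.sum_congr rfl h3]
      simp [Finset.sum_ite_eq, hx]
    rw [Finset.sum_congr rfl h2]
    simp
  have hc0 : c i0 = (Y.card : ℝ) / Real.sqrt m := by
    rw [hc]
    simp only [hv0]
    rw [Finset.sum_const, nsmul_eq_mul, mul_one_div]
  have hc0sq : (c i0)^2 = (Y.card : ℝ)^2 / m := by
    rw [hc0, div_pow, Real.sq_sqrt hm0.le]
  -- the main estimate
  have hsplit : P i0 * (c i0)^2 + Pmin * ((Y.card : ℝ) - (c i0)^2) ≤ 0 := by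
    have h1 : ∑ k : Fin m, P k * (c k)^2
        = P i0 * (c i0)^2 + ∑ k ∈ Finset.univ.erase i0, P k * (c k)^2 :=
      (Finset.add_sum_erase _ _ (Finset.mem_univ i0)).symm
    have h2 : ∑ k ∈ Finset.univ.erase i0, Pmin * (c k)^2
        ≤ ∑ k ∈ Finset.univ.erase i0, P k * (c k)^2 :=
      Finset.sum_le_sum fun k hk =>
        mul_le_mul_of_nonneg_right (hmin1 k (Finset.ne_of_mem_erase hk)) (sq_nonneg _)
    have h3 : ∑ k ∈ Finset.univ.erase i0, (c k)^2 = (Y.card : ℝ) - (c i0)^2 := by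
      rw [Finset.sum_erase_eq_sub (Finset.mem_univ i0), hpar]
    calc P i0 * (c i0)^2 + Pmin * ((Y.card : ℝ) - (c i0)^2)
        = P i0 * (c i0)^2 + ∑ k ∈ Finset.univ.erase i0, Pmin * (c k)^2 := by
          rw [← Finset.mul_sum, h3]
      _ ≤ P i0 * (c i0)^2 + ∑ k ∈ Finset.univ.erase i0, P k * (c k)^2 :=
          add_le_add_right h2 _
      _ = ∑ k : Fin m, P k * (c k)^2 := h1.symm
      _ = 0 := hzero
  set n : ℝ := (Y.card : ℝ) with hn
  have hn0 : 0 ≤ n := by positivity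
  have habs : |Pmin| = -Pmin := abs_of_neg hminneg
  rw [habs]
  have hden : 0 < P i0 + -Pmin := by linarith
  rw [div_le_div_iff₀ hm0 hden]
  -- key cleared inequality
  rw [hc0sq] at hsplit
  have hkey : P i0 * n^2 + Pmin * (n * m - n^2) ≤ 0 := by
    have hq : n^2 / m * m = n^2 := div_mul_cancel₀ _ (ne_of_gt hm0)
    nlinarith [mul_le_mul_of_nonneg_right hsplit hm0.le, hq]
  rcases eq_or_lt_of_le hn0 with h | h
  · rw [← h]
    nlinarith
  · nlinarith [hkey, h]
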